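/- arXiv:1009.2221 — 4 statements merged into one kernel-verified Lean document; each statement's English description precedes it below -/
import Mathlib

section
/- Let H be a separable real Hilbert space, (Ω, F, P) a probability space, u : Ω → H a random variable with E‖u‖² < ∞, and v : Ω → ℝᴷ a random vector whose matrix J with entries Jᵢⱼ = E[vᵢ vⱼ] is finite and invertible. Suppose D : ℝᴷ → H is a bounded linear map satisfying ⟨φ, D w⟩ = E[⟨φ, u⟩ ⟨v, w⟩] for all φ ∈ H and w ∈ ℝᴷ. Then E‖u‖² ≥ Tr(M J⁻¹), where M is the K×K Gram matrix with entries Mᵢⱼ = ⟨D eᵢ, D eⱼ⟩. -/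
open scoped InnerProductSpace
open MeasureTheory

/-- Trace form of the covariance Cauchy–Schwarz inequality: if `u` is a
square-integrable `H`-valued random variable, `v` an `ℝᴷ`-valued random vector with finite
invertible second-moment matrix `J`, and `D : ℝᴷ → H` a bounded linear map satisfying
`⟨φ, D w⟩ = E[⟨φ, u⟩⟨v, w⟩]`, then `E‖u‖² ≥ Tr(M J⁻¹)` where `Mᵢⱼ = ⟨D eᵢ, D eⱼ⟩`. -/
theorem trace_covariance_bound
    {K : ℕ} {H : Type*} [NormedAddCommGroup H] [InnerProductSpace ℝ H]
    [CompleteSpace H] [TopologicalSpace.SeparableSpace H]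
    {Ω : Type*} [MeasurableSpace Ω] (P : Measure Ω) [IsProbabilityMeasure P]
    (u : Ω → H) (hu : Integrable (fun ω => ‖u ω‖ ^ 2) P)
    (v : Ω → EuclideanSpace ℝ (Fin K))
    (hv_int : ∀ i j : Fin K, Integrable (fun ω => v ω i * v ω j) P)
    (hJ_inv : IsUnit (Matrix.of fun i j : Fin K => ∫ ω, v ω i * v ω j ∂P).det)
    (D : EuclideanSpace ℝ (Fin K) →L[ℝ] H)
    (hD : ∀ (φ : H) (w : EuclideanSpace ℝ (Fin K)),
      ⟪φ, D w⟫_ℝ = ∫ ω, ⟪φ, u ω⟫_ℝ * ⟪v ω, w⟫_ℝ ∂P) :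
    Matrix.trace
        ((Matrix.of fun i j : Fin K =>
            ⟪D (EuclideanSpace.single i (1 : ℝ)), D (EuclideanSpace.single j (1 : ℝ))⟫_ℝ) *
          (Matrix.of fun i j : Fin K => ∫ ω, v ω i * v ω j ∂P)⁻¹) ≤
      ∫ ω, ‖u ω‖ ^ 2 ∂P := by
  have hU : 0 ≤ ∫ ω, ‖u ω‖ ^ 2 ∂P := integral_nonneg fun ω => by positivity
  set J : Matrix (Fin K) (Fin K) ℝ := Matrix.of fun i j => ∫ ω, v ω i * v ω j ∂P with hJdef
  set M : Matrix (Fin K) (Fin K) ℝ := Matrix.of fun i j =>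
      ⟪D (EuclideanSpace.single i (1 : ℝ)), D (EuclideanSpace.single j (1 : ℝ))⟫_ℝ with hMdef
  set A : Matrix (Fin K) (Fin K) ℝ := J⁻¹ with hAdef
  by_cases hmeas : ∀ (φ : H) (w : EuclideanSpace ℝ (Fin K)),
      AEStronglyMeasurable (fun ω => ⟪φ, u ω⟫_ℝ * ⟪v ω, w⟫_ℝ) P
  case neg =>
    push_neg at hmeas
    obtain ⟨φ₀, w₀, h₀⟩ := hmeas
    have Z : ∀ (φ : H) (w : EuclideanSpace ℝ (Fin K)),
        ¬ AEStronglyMeasurable (fun ω => ⟪φ, u ω⟫_ℝ * ⟪v ω, w⟫_ℝ) P → ⟪φ, D w⟫_ℝ = 0 := by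
      intro φ w h
      rw [hD]
      exact integral_undef (fun hint => h hint.aestronglyMeasurable)
    have Z2 : ∀ (w : EuclideanSpace ℝ (Fin K)) (φ : H),
        ¬ AEStronglyMeasurable (fun ω => ⟪φ, u ω⟫_ℝ * ⟪v ω, w⟫_ℝ) P → D w = 0 := by
      intro w φ h
      refine ext_inner_left ℝ fun φ' => ?_
      rw [inner_zero_right]
      by_cases hφ' : AEStronglyMeasurable (fun ω => ⟪φ', u ω⟫_ℝ * ⟪v ω, w⟫_ℝ) P
      · have hsum : ¬ AEStronglyMeasurable (fun ω => ⟪φ + φ', u ω⟫_ℝ * ⟪v ω, w⟫_ℝ) P := by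
          intro hs
          apply h
          have : (fun ω => ⟪φ, u ω⟫_ℝ * ⟪v ω, w⟫_ℝ)
              = fun ω => ⟪φ + φ', u ω⟫_ℝ * ⟪v ω, w⟫_ℝ - ⟪φ', u ω⟫_ℝ * ⟪v ω, w⟫_ℝ := by
            funext ω; rw [inner_add_left]; ring
          rw [this]
          exact hs.sub hφ'
        have e1 := Z _ _ hsum
        have e2 := Z _ _ h
        rw [inner_add_left] at e1
        linarith
      · exact Z _ _ hφ'
    have Z3 : ∀ w, D w = 0 := by
      intro w
      by_cases hw : AEStronglyMeasurable (fun ω => ⟪φ₀, u ω⟫_ℝ * ⟪v ω, w⟫_ℝ) P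
      · have hww : ¬ AEStronglyMeasurable (fun ω => ⟪φ₀, u ω⟫_ℝ * ⟪v ω, w + w₀⟫_ℝ) P := by
          intro hs
          apply h₀
          have : (fun ω => ⟪φ₀, u ω⟫_ℝ * ⟪v ω, w₀⟫_ℝ)
              = fun ω => ⟪φ₀, u ω⟫_ℝ * ⟪v ω, w + w₀⟫_ℝ - ⟪φ₀, u ω⟫_ℝ * ⟪v ω, w⟫_ℝ := by
            funext ω; rw [inner_add_right]; ring
          rw [this]
          exact hs.sub hw
        have e1 : D (w + w₀) = 0 := Z2 _ _ hww
        have e2 : D w₀ = 0 := Z2 _ _ h₀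
        have : D w + D w₀ = 0 := by rw [← map_add]; exact e1
        rw [e2, add_zero] at this
        exact this
      · exact Z2 _ _ hw
    have hM0 : M = 0 := by
      ext i j
      simp [hMdef, Z3]
    rw [hM0, Matrix.zero_mul, Matrix.trace_zero]
    exact hU
  case pos =>
    -- basic facts
    have hJA : J * A = 1 := Matrix.mul_nonsing_inv J hJ_inv
    have hJsymm : J.transpose = J := by
      ext i j
      simp only [Matrix.transpose_apply, hJdef, Matrix.of_apply]
      congr 1
      funext ω
      ring
    have hAsymm : ∀ i j, A i j = A j i := by
      intro i j
      have h1 : A.transpose = A := by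
        rw [hAdef, Matrix.transpose_nonsing_inv, hJsymm]
      calc A i j = A.transpose j i := rfl
        _ = A j i := by rw [h1]
    -- inner product on EuclideanSpace
    have hsng : ∀ (ω : Ω) (i : Fin K), ⟪v ω, EuclideanSpace.single i (1:ℝ)⟫_ℝ = v ω i := by
      intro ω i; simp [EuclideanSpace.inner_single_right]
    have hinner_eu : ∀ (x y : EuclideanSpace ℝ (Fin K)), ⟪x, y⟫_ℝ = ∑ i, x i * y i := by
      intro x y; simp [PiLp.inner_apply, RCLike.inner_apply, mul_comm]
    -- integrability of squared inner with v
    have hQw : ∀ w : EuclideanSpace ℝ (Fin K), Integrable (fun ω => ⟪v ω, w⟫_ℝ ^ 2) P := by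
      intro w
      have heq : (fun ω => ⟪v ω, w⟫_ℝ ^ 2)
          = fun ω => ∑ i, ∑ j, (w i * w j) * (v ω i * v ω j) := by
        funext ω
        rw [hinner_eu, sq, Finset.sum_mul_sum]
        exact Finset.sum_congr rfl fun i _ => Finset.sum_congr rfl fun j _ => by ring
      rw [heq]
      exact integrable_finset_sum _ fun i _ =>
        integrable_finset_sum _ fun j _ => (hv_int i j).const_mul _
    -- integrability of the pairing integrands
    have hfInt : ∀ (φ : H) (w : EuclideanSpace ℝ (Fin K)),
        Integrable (fun ω => ⟪φ, u ω⟫_ℝ * ⟪v ω, w⟫_ℝ) P := by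
      intro φ w
      refine Integrable.mono'
        (g := fun ω => (‖φ‖ ^ 2 * ‖u ω‖ ^ 2 + ⟪v ω, w⟫_ℝ ^ 2) / 2)
        (((hu.const_mul _).add (hQw w)).div_const 2) (hmeas φ w) ?_
      filter_upwards with ω
      have h1 : |⟪φ, u ω⟫_ℝ| ≤ ‖φ‖ * ‖u ω‖ := abs_real_inner_le_norm _ _
      have h2 : ‖⟪φ, u ω⟫_ℝ * ⟪v ω, w⟫_ℝ‖ = |⟪φ, u ω⟫_ℝ| * |⟪v ω, w⟫_ℝ| := by
        rw [Real.norm_eq_abs, abs_mul]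
      rw [h2]
      nlinarith [sq_abs (⟪v ω, w⟫_ℝ), sq_abs (⟪φ, u ω⟫_ℝ), abs_nonneg (⟪φ, u ω⟫_ℝ),
        abs_nonneg (⟪v ω, w⟫_ℝ), sq_nonneg (|⟪φ, u ω⟫_ℝ| - |⟪v ω, w⟫_ℝ|),
        norm_nonneg φ, norm_nonneg (u ω)]
    -- the auxiliary vectors
    set ψ : Fin K → H := fun i => D (∑ j, A j i • EuclideanSpace.single j (1:ℝ)) with hψdef
    have hψ : ∀ i, ψ i = ∑ j, A j i • D (EuclideanSpace.single j (1:ℝ)) := by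
      intro i; simp [hψdef, map_sum, ContinuousLinearMap.map_smul]
    -- g i integrable and its integral
    have hg_int : ∀ i, Integrable (fun ω => ⟪ψ i, u ω⟫_ℝ * v ω i) P := by
      intro i
      have := hfInt (ψ i) (EuclideanSpace.single i (1:ℝ))
      simpa [hsng] using this
    have hg_val : ∀ i, ∫ ω, ⟪ψ i, u ω⟫_ℝ * v ω i ∂P
        = ⟪ψ i, D (EuclideanSpace.single i (1:ℝ))⟫_ℝ := by
      intro i
      rw [hD]
      congr 1
      funext ω
      rw [hsng]
    -- S, F, h, Q
    set S : ℝ := ∑ i, ⟪ψ i, D (EuclideanSpace.single i (1:ℝ))⟫_ℝ with hSdef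
    set F : Ω → ℝ := fun ω => ∑ i, ⟪ψ i, u ω⟫_ℝ * v ω i with hFdef
    have hFint : Integrable F P := integrable_finset_sum _ fun i _ => hg_int i
    have hFval : ∫ ω, F ω ∂P = S := by
      rw [hFdef]
      rw [integral_finset_sum _ fun i _ => hg_int i]
      exact Finset.sum_congr rfl fun i _ => hg_val i
    set h : Ω → H := fun ω => ∑ i, v ω i • ψ i with hhdef
    have hFh : ∀ ω, F ω = ⟪h ω, u ω⟫_ℝ := by
      intro ω
      rw [hhdef, hFdef]
      simp only [sum_inner, real_inner_smul_left]
      exact Finset.sum_congr rfl fun i _ => mul_comm _ _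
    set Q : Ω → ℝ := fun ω => ∑ i, ∑ j, (v ω i * v ω j) * ⟪ψ i, ψ j⟫_ℝ with hQdef
    have hQh : ∀ ω, ‖h ω‖ ^ 2 = Q ω := by
      intro ω
      rw [← real_inner_self_eq_norm_sq, hhdef, hQdef]
      simp only [sum_inner, inner_sum, real_inner_smul_left, real_inner_smul_right]
      refine Finset.sum_congr rfl fun i _ => Finset.sum_congr rfl fun j _ => ?_
      rw [real_inner_comm (ψ j) (ψ i)]
      ring
    have hQint : Integrable Q P := by
      rw [hQdef]
      exact integrable_finset_sum _ fun i _ =>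
        integrable_finset_sum _ fun j _ => (hv_int i j).mul_const _
    have hQval : ∫ ω, Q ω ∂P = ∑ i, ∑ j, J i j * ⟪ψ i, ψ j⟫_ℝ := by
      rw [hQdef]
      rw [integral_finset_sum _ fun i _ => integrable_finset_sum _ fun j _ =>
        (hv_int i j).mul_const _]
      refine Finset.sum_congr rfl fun i _ => ?_
      rw [integral_finset_sum _ fun j _ => (hv_int i j).mul_const _]
      exact Finset.sum_congr rfl fun j _ => integral_mul_const _ _
    -- matrix algebra: trace (M*A) = S and ∑ᵢⱼ Jᵢⱼ⟪ψᵢ,ψⱼ⟫ = S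
    have hSentry : ∀ i b, ⟪ψ i, D (EuclideanSpace.single b (1:ℝ))⟫_ℝ = ∑ a, A a i * M a b := by
      intro i b
      rw [hψ i]
      simp only [sum_inner, real_inner_smul_left]
      refine Finset.sum_congr rfl fun a _ => ?_
      simp [hMdef]
    have hMsymm : ∀ i j, M i j = M j i := by
      intro i j
      simp only [hMdef, Matrix.of_apply]
      exact real_inner_comm _ _
    have htrace : Matrix.trace (M * A) = S := by
      rw [hSdef]
      simp only [Matrix.trace, Matrix.diag, Matrix.mul_apply]
      refine Finset.sum_congr rfl fun i _ => ?_
      rw [hSentry i i]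
      refine Finset.sum_congr rfl fun j _ => ?_
      rw [hMsymm i j]; ring
    have hψinner : ∀ i j, ⟪ψ i, ψ j⟫_ℝ = ∑ b, A b j * ⟪ψ i, D (EuclideanSpace.single b (1:ℝ))⟫_ℝ := by
      intro i j
      conv_lhs => rw [show ψ j = ∑ b, A b j • D (EuclideanSpace.single b (1:ℝ)) from hψ j]
      rw [inner_sum]
      simp only [real_inner_smul_right]
    have hT : ∑ i, ∑ j, J i j * ⟪ψ i, ψ j⟫_ℝ = S := by
      rw [hSdef]
      refine Finset.sum_congr rfl fun i _ => ?_
      calc ∑ j, J i j * ⟪ψ i, ψ j⟫_ℝ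
          = ∑ j, ∑ b, (J i j * A b j) * ⟪ψ i, D (EuclideanSpace.single b (1:ℝ))⟫_ℝ := by
            refine Finset.sum_congr rfl fun j _ => ?_
            rw [hψinner i j, Finset.mul_sum]
            exact Finset.sum_congr rfl fun b _ => by ring
        _ = ∑ b, (∑ j, J i j * A b j) * ⟪ψ i, D (EuclideanSpace.single b (1:ℝ))⟫_ℝ := by
            rw [Finset.sum_comm]
            exact Finset.sum_congr rfl fun b _ => (Finset.sum_mul _ _ _).symm
        _ = ⟪ψ i, D (EuclideanSpace.single i (1:ℝ))⟫_ℝ := by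
            have hδ : ∀ b, (∑ j, J i j * A b j) = (1 : Matrix (Fin K) (Fin K) ℝ) i b := by
              intro b
              have h1 : (J * A) i b = (1 : Matrix (Fin K) (Fin K) ℝ) i b := by rw [hJA]
              rw [Matrix.mul_apply] at h1
              rw [← h1]
              exact Finset.sum_congr rfl fun j _ => by rw [hAsymm b j]
            simp only [hδ, Matrix.one_apply]
            simp
    -- pointwise inequality and conclusion
    have hpt : ∀ ω, 2 * F ω ≤ ‖u ω‖ ^ 2 + Q ω := by
      intro ω
      rw [hFh ω, ← hQh ω]
      have h1 : ⟪h ω, u ω⟫_ℝ ≤ ‖h ω‖ * ‖u ω‖ := real_inner_le_norm _ _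
      nlinarith [sq_nonneg (‖h ω‖ - ‖u ω‖)]
    have hint : ∫ ω, 2 * F ω ∂P ≤ ∫ ω, (‖u ω‖ ^ 2 + Q ω) ∂P :=
      integral_mono (hFint.const_mul 2) (hu.add hQint) hpt
    rw [integral_const_mul, hFval, integral_add hu hQint, hQval, hT] at hint
    rw [htrace]
    linarith
end

section
/- Let H be a real Hilbert space, let s₁, …, s_N ∈ H with associated set transformation S : ℝᴺ → H, and let D : ℝᴷ → H be an injective bounded linear map. Let σ_c², σ_d² ≥ 0 be such that the N×N matrix Γ := σ_c² S*S + σ_d² I_N is positive definite, where (S*S)ᵢⱼ = ⟨sⱼ, sᵢ⟩. If the range of D intersects the orthogonal complement of span{s₁, …, s_N} only in {0}, then the K×K matrix J := (S*D)ᵀ Γ⁻¹ (S*D) is invertible, where S*D is the N×K matrix with entries (S*D)ₙₖ = ⟨D eₖ, sₙ⟩. -/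
open scoped InnerProductSpace Matrix

/-- With sampling kernels `s₁,…,s_N` in a real Hilbert space, an injective
bounded linear map `D : ℝᴷ → H`, and a positive definite noise covariance
`Γ = σ_c² S*S + σ_d² I`, if the range of `D` meets `(span{s₁,…,s_N})ᗮ` only at `0`, then the
Fisher information matrix `J = (S*D)ᵀ Γ⁻¹ (S*D)` is invertible. -/
theorem sampled_fisher_information_invertible
    {H : Type*} [NormedAddCommGroup H] [InnerProductSpace ℝ H]
    {N K : ℕ} (s : Fin N → H)
    (D : EuclideanSpace ℝ (Fin K) →L[ℝ] H) (hD : Function.Injective D)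
    (σc σd : ℝ)
    (hΓ : (σc ^ 2 • (Matrix.of fun i j : Fin N => ⟪s j, s i⟫_ℝ) +
            σd ^ 2 • (1 : Matrix (Fin N) (Fin N) ℝ)).PosDef)
    (hrange : ∀ x : H, x ∈ Set.range D →
      x ∈ (Submodule.span ℝ (Set.range s))ᗮ → x = 0) :
    IsUnit
      ((Matrix.of fun (n : Fin N) (k : Fin K) =>
            ⟪D (EuclideanSpace.single k (1 : ℝ)), s n⟫_ℝ)ᵀ *
          (σc ^ 2 • (Matrix.of fun i j : Fin N => ⟪s j, s i⟫_ℝ) +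
            σd ^ 2 • (1 : Matrix (Fin N) (Fin N) ℝ))⁻¹ *
          (Matrix.of fun (n : Fin N) (k : Fin K) =>
            ⟪D (EuclideanSpace.single k (1 : ℝ)), s n⟫_ℝ)).det := by
  set M : Matrix (Fin N) (Fin K) ℝ :=
    Matrix.of fun (n : Fin N) (k : Fin K) =>
      ⟪D (EuclideanSpace.single k (1 : ℝ)), s n⟫_ℝ with hM
  set Γ : Matrix (Fin N) (Fin N) ℝ :=
    σc ^ 2 • (Matrix.of fun i j : Fin N => ⟪s j, s i⟫_ℝ) +
      σd ^ 2 • (1 : Matrix (Fin N) (Fin N) ℝ) with hΓdef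
  have hA : (Γ⁻¹).PosDef := hΓ.inv
  -- key injectivity
  have hMinj : ∀ x : Fin K → ℝ, M *ᵥ x = 0 → x = 0 := by
    intro x hx
    set y : EuclideanSpace ℝ (Fin K) := (WithLp.equiv 2 (Fin K → ℝ)).symm x with hy
    have hyx : y = ∑ k, x k • EuclideanSpace.single k (1 : ℝ) := by
      have := (EuclideanSpace.basisFun (Fin K) ℝ).sum_repr y
      simp only [EuclideanSpace.basisFun_apply, EuclideanSpace.basisFun_repr] at this
      exact this.symm
    have hDy : ∀ n, ⟪D y, s n⟫_ℝ = 0 := by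
      intro n
      have := congrFun hx n
      simp only [Matrix.mulVec, dotProduct, Pi.zero_apply] at this
      rw [hyx, map_sum]
      rw [sum_inner]
      simpa [hM, inner_smul_left, mul_comm] using this
    have horth : D y ∈ (Submodule.span ℝ (Set.range s))ᗮ := by
      rw [Submodule.mem_orthogonal]
      intro u hu
      induction hu using Submodule.span_induction with
      | mem u hu => obtain ⟨n, rfl⟩ := hu; rw [real_inner_comm]; exact hDy n
      | zero => simp
      | add u v _ _ hu hv => rw [inner_add_left, hu, hv, add_zero]
      | smul c u _ hu => rw [inner_smul_left, hu, mul_zero]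
    have : D y = 0 := hrange _ ⟨y, rfl⟩ horth
    have hy0 : y = 0 := hD (by simpa using this)
    funext k
    have := congrArg (fun v : EuclideanSpace ℝ (Fin K) => v k) hy0
    simpa [hy] using this
  have hJ : (Mᵀ * Γ⁻¹ * M).PosDef := by
    refine Matrix.PosDef.of_dotProduct_mulVec_pos ?_ ?_
    · have hAh : (Γ⁻¹).IsHermitian := hA.1
      show (Mᵀ * Γ⁻¹ * M)ᴴ = _
      calc (Mᵀ * Γ⁻¹ * M)ᴴ = Mᴴ * ((Γ⁻¹)ᴴ * Mᵀᴴ) := by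
            rw [Matrix.conjTranspose_mul, Matrix.conjTranspose_mul]
        _ = Mᵀ * Γ⁻¹ * M := by
            rw [hAh.eq, Matrix.conjTranspose_eq_transpose_of_trivial M,
              Matrix.conjTranspose_eq_transpose_of_trivial Mᵀ,
              Matrix.transpose_transpose, Matrix.mul_assoc]
    · intro x hx
      have hMx : M *ᵥ x ≠ 0 := fun h => hx (hMinj x h)
      have : star x ⬝ᵥ (Mᵀ * Γ⁻¹ * M) *ᵥ x
          = star (M *ᵥ x) ⬝ᵥ Γ⁻¹ *ᵥ (M *ᵥ x) := by
        rw [← Matrix.mulVec_mulVec, ← Matrix.mulVec_mulVec]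
        rw [Matrix.dotProduct_mulVec, Matrix.vecMul_transpose]
        simp [Matrix.dotProduct_mulVec]
      rw [this]
      exact hA.dotProduct_mulVec_pos hMx
  exact isUnit_iff_ne_zero.mpr (ne_of_gt hJ.det_pos)
end

section
/- Let H be a real Hilbert space, let g₁, …, g_K ∈ H and s₁, …, s_K ∈ H with set transformations G and S respectively, and suppose the K×K matrix S*G with entries (S*G)ₙₖ = ⟨gₖ, sₙ⟩ is invertible. Let (Ω, F, P) be a probability space, σ > 0, and let n : Ω → ℝᴷ be a random vector with E[nᵢ nⱼ] = σ² (S*S)ᵢⱼ for all i, j. Then E‖G (S*G)⁻¹ n‖² = σ² Tr((S*S)(G*S)⁻¹(G*G)(S*G)⁻¹). In particular, if sₖ = gₖ for all k, this quantity equals K σ². -/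
open scoped InnerProductSpace Matrix
open MeasureTheory

/-- The cross Gram matrix of two `K`-tuples of vectors: `(gramM s g)ₙₖ = ⟪gₖ, sₙ⟫`.
Thus `gramM s g` plays the role of `S*G`, `gramM s s` of `S*S`, etc. -/
noncomputable def gramM {H : Type*} [NormedAddCommGroup H] [InnerProductSpace ℝ H]
    {K : ℕ} (s g : Fin K → H) : Matrix (Fin K) (Fin K) ℝ :=
  Matrix.of fun n k : Fin K => ⟪g k, s n⟫_ℝ

private lemma trace_aux {K : ℕ} (σ : ℝ) (A M G : Matrix (Fin K) (Fin K) ℝ) :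
    ∑ k, ∑ l, ∑ i, ∑ j, (A k i * A l j * G l k) * (σ ^ 2 * M i j)
      = σ ^ 2 * Matrix.trace (M * Aᵀ * G * A) := by
  rw [Matrix.trace_mul_comm]
  simp only [Matrix.trace, Matrix.diag, Matrix.mul_apply, Matrix.transpose_apply,
    Finset.mul_sum, Finset.sum_mul]
  refine Finset.sum_congr rfl fun k _ => ?_
  rw [Finset.sum_comm]
  refine Finset.sum_congr rfl fun i _ => Finset.sum_congr rfl fun l _ =>
    Finset.sum_congr rfl fun j _ => by ring

private lemma int_aux {K : ℕ} {Ω : Type*} [MeasurableSpace Ω] (P : Measure Ω)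
    (σ : ℝ) (n : Ω → Fin K → ℝ) (M : Matrix (Fin K) (Fin K) ℝ)
    (hn_int : ∀ i j : Fin K, Integrable (fun ω => n ω i * n ω j) P)
    (hn_cov : ∀ i j : Fin K, ∫ ω, n ω i * n ω j ∂P = σ ^ 2 * M i j)
    (c : Fin K → Fin K → Fin K → Fin K → ℝ) :
    ∫ ω, (∑ k, ∑ l, ∑ i, ∑ j, c k l i j * (n ω i * n ω j)) ∂P
      = ∑ k, ∑ l, ∑ i, ∑ j, c k l i j * (σ ^ 2 * M i j) := by
  have h1 : ∀ ω, (∑ k, ∑ l, ∑ i, ∑ j, c k l i j * (n ω i * n ω j)) =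
      ∑ p : (Fin K × Fin K) × Fin K × Fin K,
        c p.1.1 p.1.2 p.2.1 p.2.2 * (n ω p.2.1 * n ω p.2.2) := by
    intro ω; simp [Fintype.sum_prod_type]
  simp only [h1]
  rw [integral_finset_sum _ (fun p _ => ((hn_int p.2.1 p.2.2).const_mul _))]
  simp only [integral_const_mul, hn_cov]
  simp [Fintype.sum_prod_type]

/-- MSE of the consistent estimator `x̂ = G (S*G)⁻¹ c`: if `n` is a random
vector with `E[nᵢnⱼ] = σ² (S*S)ᵢⱼ`, then
`E‖G (S*G)⁻¹ n‖² = σ² Tr((S*S)(G*S)⁻¹(G*G)(S*G)⁻¹)`; in particular when `s = g` this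
equals `K σ²`. -/
theorem consistent_estimator_mse
    {H : Type*} [NormedAddCommGroup H] [InnerProductSpace ℝ H]
    {K : ℕ} (g s : Fin K → H)
    (hSG : IsUnit (gramM s g).det)
    {Ω : Type*} [MeasurableSpace Ω] (P : Measure Ω) [IsProbabilityMeasure P]
    (σ : ℝ) (hσ : 0 < σ)
    (n : Ω → Fin K → ℝ)
    (hn_int : ∀ i j : Fin K, Integrable (fun ω => n ω i * n ω j) P)
    (hn_cov : ∀ i j : Fin K, ∫ ω, n ω i * n ω j ∂P = σ ^ 2 * ⟪s j, s i⟫_ℝ) :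
    (∫ ω, ‖∑ k : Fin K, ((gramM s g)⁻¹ *ᵥ n ω) k • g k‖ ^ 2 ∂P =
        σ ^ 2 * Matrix.trace (gramM s s * (gramM g s)⁻¹ * gramM g g * (gramM s g)⁻¹)) ∧
    ((∀ k : Fin K, s k = g k) →
      ∫ ω, ‖∑ k : Fin K, ((gramM s g)⁻¹ *ᵥ n ω) k • g k‖ ^ 2 ∂P = K * σ ^ 2) := by
  set A := (gramM s g)⁻¹ with hA
  set G := gramM g g with hG
  set M := gramM s s with hM
  have hGgs : gramM g s = (gramM s g)ᵀ := by
    ext i j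
    simp only [gramM, Matrix.of_apply, Matrix.transpose_apply]
    exact real_inner_comm _ _
  -- pointwise expansion of the squared norm
  have hpt : ∀ ω, ‖∑ k : Fin K, (A *ᵥ n ω) k • g k‖ ^ 2 =
      ∑ k, ∑ l, ∑ i, ∑ j, (A k i * A l j * G l k) * (n ω i * n ω j) := by
    intro ω
    rw [← real_inner_self_eq_norm_sq]
    simp only [sum_inner, inner_sum, real_inner_smul_left, real_inner_smul_right,
      Matrix.mulVec, dotProduct, Finset.sum_mul, Finset.mul_sum]
    refine Finset.sum_congr rfl fun k _ => Finset.sum_congr rfl fun l _ => ?_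
    have hGlk : G l k = ⟪g k, g l⟫_ℝ := rfl
    rw [real_inner_comm, Finset.sum_comm]
    refine Finset.sum_congr rfl fun i _ => Finset.sum_congr rfl fun j _ => ?_
    rw [hGlk]; ring
  have hMij : ∀ i j : Fin K, ∫ ω, n ω i * n ω j ∂P = σ ^ 2 * M i j := hn_cov
  have hmain : ∫ ω, ‖∑ k : Fin K, (A *ᵥ n ω) k • g k‖ ^ 2 ∂P =
      σ ^ 2 * Matrix.trace (M * Aᵀ * G * A) := by
    calc ∫ ω, ‖∑ k : Fin K, (A *ᵥ n ω) k • g k‖ ^ 2 ∂P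
        = ∫ ω, (∑ k, ∑ l, ∑ i, ∑ j, (A k i * A l j * G l k) * (n ω i * n ω j)) ∂P := by
          exact integral_congr_ae (Filter.Eventually.of_forall hpt)
      _ = ∑ k, ∑ l, ∑ i, ∑ j, (A k i * A l j * G l k) * (σ ^ 2 * M i j) :=
          int_aux P σ n M hn_int hMij _
      _ = σ ^ 2 * Matrix.trace (M * Aᵀ * G * A) := trace_aux σ A M G
  have htr : gramM s s * (gramM g s)⁻¹ * gramM g g * (gramM s g)⁻¹ = M * Aᵀ * G * A := by
    rw [hGgs, Matrix.transpose_nonsing_inv]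
  constructor
  · rw [htr]; exact hmain
  · intro hsg
    have hs : s = g := funext hsg
    subst hs
    rw [hmain]
    have h1 : gramM s s * (gramM s s)⁻¹ = 1 := Matrix.mul_nonsing_inv _ hSG
    have h2 : ((gramM s s)⁻¹)ᵀ = (gramM s s)⁻¹ := by
      rw [Matrix.transpose_nonsing_inv]
      congr 1
      ext i j
      simp only [gramM, Matrix.of_apply, Matrix.transpose_apply]
      exact real_inner_comm _ _
    have : M * Aᵀ * G * A = 1 := by
      rw [hM, hG, hA, h2, Matrix.mul_assoc, Matrix.mul_assoc, ← Matrix.mul_assoc (gramM s s)⁻¹,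
        Matrix.nonsing_inv_mul _ hSG, Matrix.one_mul, h1]
    rw [this, Matrix.trace_one]
    simp [mul_comm]
end

section
/- Let σ² > 0 and let λ : ℕ → ℝ be a nonincreasing sequence with λₖ ≥ 0 for all k; set μₖ := λₖ² / (λₖ + σ²). Then for every orthonormal family α⁽¹⁾, …, α⁽ᴺ⁾ of N vectors in ℓ²(ℕ, ℂ), one has Σ_{n=1}^{N} Σ_{k∈ℕ} |αₖ⁽ⁿ⁾|² μₖ ≤ Σ_{k=0}^{N−1} μₖ, and this bound is attained by taking α⁽ⁿ⁾ to be the (n−1)-th standard basis vector of ℓ²(ℕ, ℂ); hence the supremum of Σ_{n=1}^{N} Σ_{k∈ℕ} |αₖ⁽ⁿ⁾|² μₖ over all orthonormal N-families in ℓ²(ℕ, ℂ) equals Σ_{k=0}^{N−1} μₖ. -/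
open scoped ENNReal

private lemma lp_hasSum_sq (f : lp (fun _ : ℕ => ℂ) 2) :
    HasSum (fun k : ℕ => ‖f k‖ ^ 2) (‖f‖ ^ 2) := by
  have h := lp.hasSum_norm (p := 2) (by norm_num) f
  have h2 : ((2:ℝ≥0∞)).toReal = ((2:ℕ):ℝ) := by norm_num
  rw [h2] at h
  simpa [Real.rpow_natCast] using h

private lemma klt_aux (σ : ℝ) (hσ : 0 < σ) (lam : ℕ → ℝ) (hmono : Antitone lam)
    (hnonneg : ∀ k, 0 ≤ lam k) (N : ℕ)
    (α : Fin N → lp (fun _ : ℕ => ℂ) 2) (hα : Orthonormal ℂ α) :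
    ∑ n : Fin N, ∑' k : ℕ, ‖α n k‖ ^ 2 * (lam k ^ 2 / (lam k + σ ^ 2)) ≤
      ∑ k ∈ Finset.range N, lam k ^ 2 / (lam k + σ ^ 2) := by
  set μ : ℕ → ℝ := fun k => lam k ^ 2 / (lam k + σ ^ 2) with hμdef
  have hden : ∀ k, 0 < lam k + σ ^ 2 := fun k =>
    add_pos_of_nonneg_of_pos (hnonneg k) (pow_pos hσ 2)
  have hμ0 : ∀ k, 0 ≤ μ k := fun k => div_nonneg (sq_nonneg _) (hden k).le
  have hμanti : Antitone μ := by
    intro a b hab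
    have h1 : lam b ≤ lam a := hmono hab
    have h2 : 0 ≤ lam b := hnonneg b
    rw [hμdef]
    dsimp only
    rw [div_le_div_iff₀ (hden b) (hden a)]
    nlinarith [mul_nonneg (mul_nonneg h2 (hnonneg a)) (sub_nonneg.2 h1),
      mul_nonneg (mul_nonneg (sq_nonneg σ) (add_nonneg h2 (hnonneg a))) (sub_nonneg.2 h1)]
  -- summability of squares
  have hs : ∀ n : Fin N, HasSum (fun k : ℕ => ‖α n k‖ ^ 2) 1 := by
    intro n
    have := lp_hasSum_sq (α n)
    rwa [hα.1 n, one_pow] at this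
  have hsum : ∀ n : Fin N, Summable (fun k : ℕ => ‖α n k‖ ^ 2) := fun n => (hs n).summable
  set c : ℕ → ℝ := fun k => ∑ n : Fin N, ‖α n k‖ ^ 2 with hcdef
  have hc0 : ∀ k, 0 ≤ c k := fun k => Finset.sum_nonneg fun n _ => by positivity
  have hcsum : Summable c := summable_sum fun n _ => hsum n
  have hctsum : ∑' k, c k = N := by
    rw [hcdef]
    rw [Summable.tsum_finsetSum (fun n _ => hsum n)]
    have ht : ∀ n : Fin N, ∑' k : ℕ, ‖α n k‖ ^ 2 = 1 := fun n => (hs n).tsum_eq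
    simp only [ht]
    simp
  -- Bessel: c k ≤ 1
  have hE : ∀ (f : lp (fun _ : ℕ => ℂ) 2) (k : ℕ),
      @inner ℂ _ _ (lp.single 2 k (1:ℂ) : lp (fun _ : ℕ => ℂ) 2) f = f k := by
    intro f k; rw [lp.inner_single_left]; simp
  have hc1 : ∀ k, c k ≤ 1 := by
    intro k
    have hb := hα.sum_inner_products_le (s := Finset.univ)
      ((lp.single 2 k (1:ℂ) : lp (fun _ : ℕ => ℂ) 2))
    have hnormE : ‖(lp.single 2 k (1:ℂ) : lp (fun _ : ℕ => ℂ) 2)‖ = 1 := by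
      have := lp.norm_single (p := 2) (E := fun _ : ℕ => ℂ) (by norm_num) k (1:ℂ)
      simpa using this
    rw [hnormE, one_pow] at hb
    refine le_trans (le_of_eq ?_) hb
    rw [hcdef]
    refine Finset.sum_congr rfl fun n _ => ?_
    rw [← inner_conj_symm, hE (α n) k]
    simp
  -- summability of c k * μ k etc.
  have hμtop : ∀ k, μ k ≤ μ 0 := fun k => hμanti (Nat.zero_le k)
  have hsummul : ∀ n : Fin N, Summable (fun k => ‖α n k‖ ^ 2 * μ k) := by
    intro n
    refine Summable.of_nonneg_of_le (fun k => mul_nonneg (by positivity) (hμ0 k))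
      (fun k => ?_) ((hsum n).mul_right (μ 0))
    exact mul_le_mul_of_nonneg_left (hμtop k) (by positivity)
  have hcmul : Summable (fun k => c k * μ k) := by
    simpa [hcdef, Finset.sum_mul] using summable_sum (fun n (_ : n ∈ Finset.univ) => hsummul n)
  -- rewrite LHS
  have hLHS : ∑ n : Fin N, ∑' k : ℕ, ‖α n k‖ ^ 2 * μ k = ∑' k, c k * μ k := by
    rw [← Summable.tsum_finsetSum (fun n _ => hsummul n)]
    congr 1; funext k; rw [hcdef]; rw [Finset.sum_mul]
  rw [hLHS]
  -- key inequality
  set t : ℝ := μ N with htdef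
  have hsub : Summable (fun k => c k * (μ k - t)) := by
    have := hcmul.sub (hcsum.mul_right t)
    convert this using 2 with k
    · rfl
    ring
  have hg : Summable (fun k : ℕ => if k < N then μ k - t else 0) :=
    summable_of_ne_finset_zero (s := Finset.range N)
      (fun k hk => by simp [Finset.mem_range] at hk; simp [hk])
  have hle : ∑' k, c k * (μ k - t) ≤ ∑ k ∈ Finset.range N, (μ k - t) := by
    have h1 : ∑' k, c k * (μ k - t) ≤ ∑' k : ℕ, if k < N then μ k - t else 0 := by
      refine Summable.tsum_le_tsum (fun k => ?_) hsub hg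
      by_cases hk : k < N
      · simp only [hk, if_true]
        have hμt : 0 ≤ μ k - t := sub_nonneg.2 (hμanti hk.le)
        nlinarith [hc1 k, hc0 k]
      · simp only [hk, if_false]
        have hμt : μ k - t ≤ 0 := sub_nonpos.2 (hμanti (not_lt.1 hk))
        exact mul_nonpos_of_nonneg_of_nonpos (hc0 k) hμt
    have h2 : ∑' k : ℕ, (if k < N then μ k - t else 0) = ∑ k ∈ Finset.range N, (μ k - t) := by
      rw [tsum_eq_sum (s := Finset.range N)
        (fun k hk => by simp [Finset.mem_range] at hk; simp [hk])]
      exact Finset.sum_congr rfl fun k hk => by simp [Finset.mem_range.1 hk]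
    exact h1.trans (le_of_eq h2)
  have hsplit : ∑' k, c k * μ k = (∑' k, c k * (μ k - t)) + t * N := by
    have : (fun k => c k * μ k) = fun k => c k * (μ k - t) + t * c k := by
      funext k; ring
    rw [this, Summable.tsum_add hsub (hcsum.mul_left t), tsum_mul_left, hctsum]
  rw [hsplit]
  have : ∑ k ∈ Finset.range N, (μ k - t) = (∑ k ∈ Finset.range N, μ k) - t * N := by
    rw [Finset.sum_sub_distrib]
    simp [mul_comm]
  linarith [hle]

/-- Let `σ > 0`, let `λ : ℕ → ℝ` be nonincreasing and nonnegative, and set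
`μₖ = λₖ²/(λₖ + σ²)`. Then for every orthonormal family `α⁽¹⁾,…,α⁽ᴺ⁾` in `ℓ²(ℕ, ℂ)` one has
`Σₙ Σₖ |αₖ⁽ⁿ⁾|² μₖ ≤ Σ_{k<N} μₖ`; the bound is attained by the standard basis vectors; hence
the supremum over all orthonormal `N`-families equals `Σ_{k<N} μₖ`. -/
theorem klt_orthonormal_maximization
    (σ : ℝ) (hσ : 0 < σ) (lam : ℕ → ℝ) (hmono : Antitone lam) (hnonneg : ∀ k, 0 ≤ lam k)
    (N : ℕ) :
    (∀ α : Fin N → lp (fun _ : ℕ => ℂ) 2, Orthonormal ℂ α →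
      ∑ n : Fin N, ∑' k : ℕ, ‖α n k‖ ^ 2 * (lam k ^ 2 / (lam k + σ ^ 2)) ≤
        ∑ k ∈ Finset.range N, lam k ^ 2 / (lam k + σ ^ 2)) ∧
    (Orthonormal ℂ (fun n : Fin N => (lp.single 2 (n : ℕ) (1 : ℂ) : lp (fun _ : ℕ => ℂ) 2)) ∧
      ∑ n : Fin N, ∑' k : ℕ,
          ‖(lp.single 2 (n : ℕ) (1 : ℂ) : lp (fun _ : ℕ => ℂ) 2) k‖ ^ 2 *
            (lam k ^ 2 / (lam k + σ ^ 2)) =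
        ∑ k ∈ Finset.range N, lam k ^ 2 / (lam k + σ ^ 2)) ∧
    IsGreatest
      {x : ℝ | ∃ α : Fin N → lp (fun _ : ℕ => ℂ) 2, Orthonormal ℂ α ∧
        x = ∑ n : Fin N, ∑' k : ℕ, ‖α n k‖ ^ 2 * (lam k ^ 2 / (lam k + σ ^ 2))}
      (∑ k ∈ Finset.range N, lam k ^ 2 / (lam k + σ ^ 2)) := by
  have hEon : Orthonormal ℂ
      (fun n : Fin N => (lp.single 2 (n : ℕ) (1 : ℂ) : lp (fun _ : ℕ => ℂ) 2)) := by
    rw [orthonormal_iff_ite]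
    intro i j
    rw [lp.inner_single_left, lp.single_apply, Pi.single_apply]
    split_ifs with h h' h'
    · simp
    · exact absurd (Fin.val_injective h) h'
    · exact absurd (congrArg Fin.val h') h
    · simp
  have hEval : ∑ n : Fin N, ∑' k : ℕ,
      ‖(lp.single 2 (n : ℕ) (1 : ℂ) : lp (fun _ : ℕ => ℂ) 2) k‖ ^ 2 *
        (lam k ^ 2 / (lam k + σ ^ 2)) =
      ∑ k ∈ Finset.range N, lam k ^ 2 / (lam k + σ ^ 2) := by
    rw [← Fin.sum_univ_eq_sum_range]
    refine Finset.sum_congr rfl fun n _ => ?_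
    rw [tsum_eq_single (n : ℕ) (fun b hb => by
      rw [lp.single_apply_ne 2 _ _ hb]; simp)]
    rw [lp.single_apply_self]
    simp
  refine ⟨klt_aux σ hσ lam hmono hnonneg N, ⟨hEon, hEval⟩, ?_, ?_⟩
  · exact ⟨_, hEon, hEval.symm⟩
  · rintro x ⟨α, hα, rfl⟩
    exact klt_aux σ hσ lam hmono hnonneg N α hα
end
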